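/- For β ≥ 1/√3, the function k₂(x) = (β+1)x^{(β+1)/2} − β x^{(β+3)/2} − (β+1)x + β satisfies k₂''(x) < 0 for all x ∈ (β/(β+1), 1), i.e., k₂ is strictly concave on that interval. -/
import Mathlib

noncomputable def k2Fun (β x : ℝ) : ℝ :=
  (β + 1) * x ^ ((β + 1) / 2) - β * x ^ ((β + 3) / 2) - (β + 1) * x + β

noncomputable def k2g (β x : ℝ) : ℝ :=
  (β + 1) * ((β + 1) / 2 * x ^ ((β - 1) / 2)) - β * ((β + 3) / 2 * x ^ ((β + 1) / 2)) - (β + 1)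

lemma k2_hasDeriv1 (β : ℝ) {x : ℝ} (hx : 0 < x) : HasDerivAt (k2Fun β) (k2g β x) x := by
  have h1 : HasDerivAt (fun x : ℝ => x ^ ((β + 1) / 2)) (((β + 1) / 2) * x ^ ((β + 1) / 2 - 1)) x :=
    Real.hasDerivAt_rpow_const (Or.inl hx.ne')
  have h2 : HasDerivAt (fun x : ℝ => x ^ ((β + 3) / 2)) (((β + 3) / 2) * x ^ ((β + 3) / 2 - 1)) x :=
    Real.hasDerivAt_rpow_const (Or.inl hx.ne')
  have h := (((h1.const_mul (β + 1)).sub (h2.const_mul β)).sub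
    ((hasDerivAt_id x).const_mul (β + 1))).add_const β
  have e1 : (β + 1) / 2 - 1 = (β - 1) / 2 := by ring
  have e2 : (β + 3) / 2 - 1 = (β + 1) / 2 := by ring
  rw [e1, e2] at h
  have heq : k2g β x = (β + 1) * ((β + 1) / 2 * x ^ ((β - 1) / 2)) -
      β * ((β + 3) / 2 * x ^ ((β + 1) / 2)) - (β + 1) * 1 := by
    unfold k2g; ring
  rw [heq]
  exact h

lemma k2_hasDeriv2 (β : ℝ) {x : ℝ} (hx : 0 < x) :
    HasDerivAt (k2g β)
      ((β + 1) * ((β + 1) / 2 * ((β - 1) / 2 * x ^ ((β - 3) / 2))) -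
        β * ((β + 3) / 2 * ((β + 1) / 2 * x ^ ((β - 1) / 2)))) x := by
  have h1 : HasDerivAt (fun x : ℝ => x ^ ((β - 1) / 2)) (((β - 1) / 2) * x ^ ((β - 1) / 2 - 1)) x :=
    Real.hasDerivAt_rpow_const (Or.inl hx.ne')
  have h2 : HasDerivAt (fun x : ℝ => x ^ ((β + 1) / 2)) (((β + 1) / 2) * x ^ ((β + 1) / 2 - 1)) x :=
    Real.hasDerivAt_rpow_const (Or.inl hx.ne')
  have e1 : (β - 1) / 2 - 1 = (β - 3) / 2 := by ring
  have e2 : (β + 1) / 2 - 1 = (β - 1) / 2 := by ring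
  rw [e1] at h1; rw [e2] at h2
  exact (((h1.const_mul ((β + 1) / 2 : ℝ)).const_mul (β + 1)).sub
    ((h2.const_mul ((β + 3) / 2 : ℝ)).const_mul β)).sub_const (β + 1)

/-- For β ≥ 1/√3, k₂''(x) < 0 on (β/(β+1), 1), i.e. k₂ is strictly concave there. -/
theorem k2_second_deriv_neg (β : ℝ) (hβ : 1 / Real.sqrt 3 ≤ β) :
    (∀ x ∈ Set.Ioo (β / (β + 1)) 1, deriv (deriv (k2Fun β)) x < 0) ∧
      StrictConcaveOn ℝ (Set.Ioo (β / (β + 1)) 1) (k2Fun β) := by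
  have hs3 : 0 < Real.sqrt 3 := Real.sqrt_pos.mpr (by norm_num)
  have hβ0 : 0 < β := lt_of_lt_of_le (by positivity) hβ
  have hb1 : 0 < β + 1 := by linarith
  have hlb : 0 ≤ β / (β + 1) := by positivity
  have key : ∀ x ∈ Set.Ioo (β / (β + 1)) 1, deriv (deriv (k2Fun β)) x < 0 := by
    intro x hx
    have hx0 : 0 < x := lt_of_le_of_lt hlb hx.1
    have hev : deriv (k2Fun β) =ᶠ[nhds x] k2g β := by
      filter_upwards [Ioi_mem_nhds hx0] with y hy
      exact (k2_hasDeriv1 β hy).deriv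
    rw [hev.deriv_eq, (k2_hasDeriv2 β hx0).deriv]
    have hrw : x ^ ((β - 1) / 2) = x ^ ((β - 3) / 2) * x := by
      have h := Real.rpow_add hx0 ((β - 3) / 2) 1
      rw [Real.rpow_one] at h
      rw [show (β - 1) / 2 = (β - 3) / 2 + 1 by ring, h]
    rw [hrw]
    have ht : 0 < x ^ ((β - 3) / 2) := Real.rpow_pos_of_pos hx0 _
    have hβx : β < x * (β + 1) := (div_lt_iff₀ hb1).mp hx.1
    have hbr : (β + 1) / 4 * (β ^ 2 - 1 - β * (β + 3) * x) < 0 := by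
      nlinarith [mul_lt_mul_of_pos_left hβx (mul_pos hβ0 (by linarith : (0:ℝ) < β + 3))]
    calc (β + 1) * ((β + 1) / 2 * ((β - 1) / 2 * x ^ ((β - 3) / 2))) -
        β * ((β + 3) / 2 * ((β + 1) / 2 * (x ^ ((β - 3) / 2) * x)))
        = x ^ ((β - 3) / 2) * ((β + 1) / 4 * (β ^ 2 - 1 - β * (β + 3) * x)) := by ring
      _ < 0 := mul_neg_of_pos_of_neg ht hbr
  refine ⟨key, strictConcaveOn_of_deriv2_neg (convex_Ioo _ _) ?_ ?_⟩
  · exact fun x hx =>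
      ((k2_hasDeriv1 β (lt_of_le_of_lt hlb hx.1)).differentiableAt.continuousAt).continuousWithinAt
  · intro x hx
    rw [interior_Ioo] at hx
    exact key x hx
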